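/- Let S₀ ⊆ ℤ_{≥0}^J be a finite schedule set containing 0 with convex hull ⟨S₀⟩, α > 0, g_j : ℝ_{≥0} → ℝ strictly concave continuous. Let (q^{(c)}) be a sequence in ℤ_{≥0}^J with ‖q^{(c)}‖₁ = c and q^{(c)}/c → q. Define σ̂(q^{(c)}) as any maximizer of Σ_j g_j(s_j) (q_j^{(c)})^α over ⟨S₀ ∧ q^{(c)}⟩, and σ*(q) as the maximizer over ⟨S₀⟩. Then for every j with q_j > 0, σ̂_j(q^{(c)}) → σ*_j(q) as c → ∞. -/

import Mathlib

open Filter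

/-- Uniqueness (in coordinates with positive weight) of the maximizer of a
weighted sum of strictly concave functions over a convex set of nonnegative
vectors. -/
lemma aux_unique_max {J : Type*} [Fintype J] (w : J → ℝ) (hw : ∀ j, 0 ≤ w j)
    (g : J → ℝ → ℝ) (hg : ∀ j, StrictConcaveOn ℝ (Set.Ici (0:ℝ)) (g j))
    (V : Set (J → ℝ)) (hV : Convex ℝ V) (hVnn : ∀ x ∈ V, ∀ j, 0 ≤ x j)
    (u v : J → ℝ) (hu : u ∈ V) (hv : v ∈ V)
    (hmaxu : ∀ s ∈ V, ∑ j, g j (s j) * w j ≤ ∑ j, g j (u j) * w j)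
    (heq : ∑ j, g j (v j) * w j = ∑ j, g j (u j) * w j)
    {j : J} (hwj : 0 < w j) : u j = v j := by
  by_contra hne
  have h2 : (0:ℝ) ≤ 1/2 := by norm_num
  have h2' : (0:ℝ) < 1/2 := by norm_num
  have hab : (1/2 : ℝ) + 1/2 = 1 := by norm_num
  have hmV : (1/2:ℝ) • u + (1/2:ℝ) • v ∈ V := hV hu hv h2 h2 hab
  set m := (1/2:ℝ) • u + (1/2:ℝ) • v with hmdef
  have hmi : ∀ i, m i = (1/2:ℝ) * u i + (1/2:ℝ) * v i := by
    intro i; simp [hmdef]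
  have hterm : ∀ i, ((1/2:ℝ) * g i (u i) + (1/2:ℝ) * g i (v i)) * w i
      ≤ g i (m i) * w i := by
    intro i
    refine mul_le_mul_of_nonneg_right ?_ (hw i)
    have := (hg i).concaveOn.2 (Set.mem_Ici.2 (hVnn u hu i)) (Set.mem_Ici.2 (hVnn v hv i))
      h2 h2 hab
    rw [hmi i]
    simpa [smul_eq_mul] using this
  have hstrict : ((1/2:ℝ) * g j (u j) + (1/2:ℝ) * g j (v j)) * w j
      < g j (m j) * w j := by
    refine mul_lt_mul_of_pos_right ?_ hwj
    have := (hg j).2 (Set.mem_Ici.2 (hVnn u hu j)) (Set.mem_Ici.2 (hVnn v hv j))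
      hne h2' h2' hab
    rw [hmi j]
    simpa [smul_eq_mul] using this
  have hsum : ∑ i, ((1/2:ℝ) * g i (u i) + (1/2:ℝ) * g i (v i)) * w i
      < ∑ i, g i (m i) * w i :=
    Finset.sum_lt_sum (fun i _ => hterm i) ⟨j, Finset.mem_univ j, hstrict⟩
  have hL : ∑ i, ((1/2:ℝ) * g i (u i) + (1/2:ℝ) * g i (v i)) * w i
      = ∑ i, g i (u i) * w i := by
    have : ∑ i, ((1/2:ℝ) * g i (u i) + (1/2:ℝ) * g i (v i)) * w i
        = (1/2:ℝ) * (∑ i, g i (u i) * w i) + (1/2:ℝ) * (∑ i, g i (v i) * w i) := by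
      rw [Finset.mul_sum, Finset.mul_sum, ← Finset.sum_add_distrib]
      apply Finset.sum_congr rfl
      intro i _; ring
    rw [this, heq]; ring
  rw [hL] at hsum
  exact absurd (hmaxu m hmV) (not_le.2 hsum)

/-- maximizers over the queue-truncated schedule polytopes
converge, in every coordinate with positive fluid queue, to the unconstrained
maximizer. -/
theorem stmt_15 {J : Type*} [Fintype J]
    (S₀ : Finset (J → ℤ)) (h0 : (0 : J → ℤ) ∈ S₀) (hnn : ∀ σ ∈ S₀, ∀ j, 0 ≤ σ j)
    (α : ℝ) (hα : 0 < α)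
    (g : J → ℝ → ℝ) (hg_conc : ∀ j, StrictConcaveOn ℝ (Set.Ici (0:ℝ)) (g j))
    (hg_cont : ∀ j, Continuous (g j))
    (qc : ℕ → (J → ℕ)) (hqc : ∀ c, (∑ j, qc c j) = c)
    (q : J → ℝ)
    (hconv : ∀ j, Tendsto (fun c : ℕ => (qc c j : ℝ) / c) atTop (nhds (q j)))
    (σhat : ℕ → (J → ℝ))
    (hσhat_mem : ∀ c, σhat c ∈ convexHull ℝ
      ((fun σ : J → ℤ => fun j => min (σ j : ℝ) (qc c j)) '' (S₀ : Set (J → ℤ))))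
    (hσhat_max : ∀ c, ∀ s ∈ convexHull ℝ
        ((fun σ : J → ℤ => fun j => min (σ j : ℝ) (qc c j)) '' (S₀ : Set (J → ℤ))),
      ∑ j, g j (s j) * (qc c j : ℝ) ^ α ≤ ∑ j, g j (σhat c j) * (qc c j : ℝ) ^ α)
    (σstar : J → ℝ)
    (hσstar_mem : σstar ∈ convexHull ℝ
      ((fun σ : J → ℤ => fun j => (σ j : ℝ)) '' (S₀ : Set (J → ℤ))))
    (hσstar_max : ∀ s ∈ convexHull ℝ
        ((fun σ : J → ℤ => fun j => (σ j : ℝ)) '' (S₀ : Set (J → ℤ))),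
      ∑ j, g j (s j) * q j ^ α ≤ ∑ j, g j (σstar j) * q j ^ α) :
    ∀ j, 0 < q j → Tendsto (fun c : ℕ => σhat c j) atTop (nhds (σstar j)) := by
  classical
  intro j₀ hqj₀
  have hJ : Nonempty J := ⟨j₀⟩
  -- q is nonnegative
  have hq0 : ∀ j, 0 ≤ q j := by
    intro j
    refine ge_of_tendsto' (hconv j) (fun c => ?_)
    positivity
  -- uniform bound on schedule values
  set Mn : ℕ := S₀.sup fun σ => Finset.univ.sup fun j => (σ j).toNat with hMndef
  have hM : ∀ σ ∈ S₀, ∀ j, (σ j : ℝ) ≤ (Mn : ℝ) := by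
    intro σ hσ j
    have h1 : (σ j).toNat ≤ Mn :=
      le_trans (Finset.le_sup (f := fun j => (σ j).toNat) (Finset.mem_univ j))
        (Finset.le_sup (f := fun σ => Finset.univ.sup fun j => (σ j).toNat) hσ)
    have h2 : σ j ≤ ((σ j).toNat : ℤ) := Int.self_le_toNat _
    calc (σ j : ℝ) ≤ ((σ j).toNat : ℝ) := by exact_mod_cast h2
    _ ≤ (Mn : ℝ) := by exact_mod_cast h1
  -- the box
  set Box : Set (J → ℝ) := Set.univ.pi fun _ : J => Set.Icc (0:ℝ) (Mn:ℝ) with hBoxdef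
  have hBox_mem : ∀ x : J → ℝ, x ∈ Box ↔ ∀ j, x j ∈ Set.Icc (0:ℝ) (Mn:ℝ) := by
    intro x
    rw [hBoxdef]
    exact Set.mem_univ_pi
  have hBox_convex : Convex ℝ Box := convex_pi fun _ _ => convex_Icc _ _
  -- K, the untruncated polytope
  set K : Set (J → ℝ) :=
    convexHull ℝ ((fun σ : J → ℤ => fun j => (σ j : ℝ)) '' (S₀ : Set (J → ℤ))) with hKdef
  have hKcompact : IsCompact K :=
    (S₀.finite_toSet.image _).isCompact_convexHull ℝ
  have hKBox : K ⊆ Box := by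
    refine convexHull_min ?_ hBox_convex
    rintro x ⟨σ, hσ, rfl⟩
    rw [hBox_mem]
    intro j
    refine Set.mem_Icc.2 ⟨?_, ?_⟩
    · show (0:ℝ) ≤ (σ j : ℝ)
      exact_mod_cast hnn σ hσ j
    · show (σ j : ℝ) ≤ (Mn : ℝ)
      exact hM σ hσ j
  -- truncated polytopes are in the box too
  have hKcBox : ∀ c, convexHull ℝ
      ((fun σ : J → ℤ => fun j => min (σ j : ℝ) (qc c j)) '' (S₀ : Set (J → ℤ))) ⊆ Box := by
    intro c
    refine convexHull_min ?_ hBox_convex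
    rintro x ⟨σ, hσ, rfl⟩
    rw [hBox_mem]
    intro j
    refine Set.mem_Icc.2 ⟨?_, ?_⟩
    · show (0:ℝ) ≤ min (σ j : ℝ) (qc c j)
      apply le_min
      · exact_mod_cast hnn σ hσ j
      · positivity
    · show min (σ j : ℝ) ((qc c j : ℕ) : ℝ) ≤ (Mn : ℝ)
      exact le_trans (min_le_left _ _) (hM σ hσ j)
  have hσhatBox : ∀ c j, σhat c j ∈ Set.Icc (0:ℝ) (Mn:ℝ) := by
    intro c j
    exact (hBox_mem _).1 (hKcBox c (hσhat_mem c)) j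
  -- coordinates with positive q go to infinity
  have hinf : ∀ j, 0 < q j → Tendsto (fun c : ℕ => (qc c j : ℝ)) atTop atTop := by
    intro j hj
    have h1 : Tendsto (fun c : ℕ => ((qc c j : ℝ) / c) * c) atTop atTop :=
      Filter.Tendsto.pos_mul_atTop hj (hconv j) tendsto_natCast_atTop_atTop
    refine Tendsto.congr' ?_ h1
    filter_upwards [eventually_ge_atTop 1] with c hc
    have hc0 : (c : ℝ) ≠ 0 := by
      have : (0:ℝ) < c := by exact_mod_cast hc
      exact this.ne'
    field_simp
  -- the approximating points u c ∈ K agreeing with σhat c on untruncated coords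
  have hex : ∀ c, ∃ u ∈ K, ∀ j, (Mn:ℝ) ≤ (qc c j : ℝ) → u j = σhat c j := by
    intro c
    set fc : (J → ℤ) → (J → ℝ) := fun σ => fun j => min (σ j : ℝ) (qc c j) with hfc
    have hmem := hσhat_mem c
    rw [show ((fun σ : J → ℤ => fun j => min (σ j : ℝ) (qc c j)) '' (S₀ : Set (J → ℤ)))
        = ↑(S₀.image fc) by rw [Finset.coe_image], Finset.convexHull_eq] at hmem
    obtain ⟨w, hw0, hw1, hcm⟩ := hmem
    have hpick : ∀ y : J → ℝ, ∃ σ : J → ℤ, y ∈ S₀.image fc → σ ∈ S₀ ∧ fc σ = y := by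
      intro y
      by_cases hy : y ∈ S₀.image fc
      · obtain ⟨σ, hσ, hσy⟩ := Finset.mem_image.1 hy
        exact ⟨σ, fun _ => ⟨hσ, hσy⟩⟩
      · exact ⟨0, fun h => absurd h hy⟩
    choose p hp using hpick
    refine ⟨(S₀.image fc).centerMass w (fun y => fun j => ((p y) j : ℝ)), ?_, ?_⟩
    · rw [hKdef]
      refine Finset.centerMass_mem_convexHull _ hw0 (by rw [hw1]; exact one_pos) ?_
      intro y hy
      exact Set.mem_image_of_mem _ ((hp y hy).1)
    · intro j hj
      rw [Finset.centerMass_eq_of_sum_1 _ _ hw1]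
      have h2 : σhat c j = ∑ y ∈ S₀.image fc, w y * y j := by
        rw [← hcm, Finset.centerMass_eq_of_sum_1 _ _ hw1]
        simp [Finset.sum_apply]
      rw [h2, Finset.sum_apply]
      refine Finset.sum_congr rfl ?_
      intro y hy
      have h3 : y j = min (((p y) j : ℝ)) (qc c j) := by
        conv_lhs => rw [← (hp y hy).2]
      have h4 : ((p y) j : ℝ) ≤ (qc c j : ℝ) := le_trans (hM _ (hp y hy).1 j) hj
      simp [h3, min_eq_left h4, smul_eq_mul]
  choose u huK hu_eq using hex
  -- comparison points t c in the truncated polytope agreeing with σstar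
  have hext : ∃ t : ℕ → (J → ℝ),
      (∀ c, t c ∈ convexHull ℝ
        ((fun σ : J → ℤ => fun j => min (σ j : ℝ) (qc c j)) '' (S₀ : Set (J → ℤ)))) ∧
      (∀ c j, (Mn:ℝ) ≤ (qc c j : ℝ) → t c j = σstar j) := by
    have hmem := hσstar_mem
    rw [hKdef] at hmem
    rw [show ((fun σ : J → ℤ => fun j => (σ j : ℝ)) '' (S₀ : Set (J → ℤ)))
        = ↑(S₀.image (fun σ : J → ℤ => fun j => (σ j : ℝ)))
        from (Finset.coe_image).symm, Finset.convexHull_eq] at hmem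
    obtain ⟨w, hw0, hw1, hcm⟩ := hmem
    have hpick : ∀ y : J → ℝ, ∃ σ : J → ℤ,
        y ∈ S₀.image (fun σ : J → ℤ => fun j => (σ j : ℝ)) →
        σ ∈ S₀ ∧ (fun j => (σ j : ℝ)) = y := by
      intro y
      by_cases hy : y ∈ S₀.image (fun σ : J → ℤ => fun j => (σ j : ℝ))
      · obtain ⟨σ, hσ, hσy⟩ := Finset.mem_image.1 hy
        exact ⟨σ, fun _ => ⟨hσ, hσy⟩⟩
      · exact ⟨0, fun h => absurd h hy⟩
    choose p hp using hpick
    refine ⟨fun c => (S₀.image (fun σ : J → ℤ => fun j => (σ j : ℝ))).centerMass w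
        (fun y => fun j => min (((p y) j : ℝ)) (qc c j)), ?_, ?_⟩
    · intro c
      beta_reduce
      refine Finset.centerMass_mem_convexHull _ hw0 (by rw [hw1]; exact one_pos) ?_
      intro y hy
      exact Set.mem_image_of_mem _ ((hp y hy).1)
    · intro c j hj
      beta_reduce
      rw [Finset.centerMass_eq_of_sum_1 _ _ hw1]
      have h2 : σstar j = ∑ y ∈ S₀.image (fun σ : J → ℤ => fun j => (σ j : ℝ)), w y * y j := by
        rw [← hcm, Finset.centerMass_eq_of_sum_1 _ _ hw1]
        simp [Finset.sum_apply]
      rw [h2, Finset.sum_apply]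
      refine Finset.sum_congr rfl ?_
      intro y hy
      have h3 : y j = ((p y) j : ℝ) := by
        conv_lhs => rw [← (hp y hy).2]
      have h4 : ((p y) j : ℝ) ≤ (qc c j : ℝ) := le_trans (hM _ (hp y hy).1 j) hj
      simp [h3, min_eq_left h4, smul_eq_mul]
  obtain ⟨t, ht_mem, ht_eq⟩ := hext
  have htBox : ∀ c j, t c j ∈ Set.Icc (0:ℝ) (Mn:ℝ) := by
    intro c j
    exact (hBox_mem _).1 (hKcBox c (ht_mem c)) j
  -- normalized weights
  set W : ℕ → J → ℝ := fun c j => ((qc c j : ℝ) / c) ^ α with hWdef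
  have hWnn : ∀ c j, 0 ≤ W c j := by
    intro c j
    apply Real.rpow_nonneg
    positivity
  have hWlim : ∀ j, Tendsto (fun c => W c j) atTop (nhds (q j ^ α)) := by
    intro j
    exact ((Real.continuousAt_rpow_const (q j) α (Or.inr hα.le)).tendsto).comp (hconv j)
  -- normalized inequality
  have hineq : ∀ c : ℕ, 1 ≤ c →
      ∑ j, g j (t c j) * W c j ≤ ∑ j, g j (σhat c j) * W c j := by
    intro c hc
    have h := hσhat_max c (t c) (ht_mem c)
    have hcpos : (0:ℝ) < (c:ℝ) := by exact_mod_cast hc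
    have hcα : (0:ℝ) < (c:ℝ) ^ α := Real.rpow_pos_of_pos hcpos α
    have hWformula : ∀ (x : J → ℝ), ∑ j, g j (x j) * W c j
        = (∑ j, g j (x j) * (qc c j : ℝ) ^ α) / (c:ℝ) ^ α := by
      intro x
      rw [Finset.sum_div]
      refine Finset.sum_congr rfl ?_
      intro j _
      have hWcj : W c j = ((qc c j : ℝ) / (c:ℝ)) ^ α := rfl
      rw [hWcj, Real.div_rpow (by positivity) hcpos.le]
      ring
    rw [hWformula, hWformula]
    have h2 := mul_le_mul_of_nonneg_right h (inv_nonneg.2 hcα.le)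
    simpa [div_eq_mul_inv] using h2
  -- bounds on g on the box
  have hgbdd : ∀ j, ∃ C : ℝ, ∀ x ∈ Set.Icc (0:ℝ) (Mn:ℝ), |g j x| ≤ C := by
    intro j
    obtain ⟨C, hC⟩ := (isCompact_Icc (a := (0:ℝ)) (b := (Mn:ℝ))).exists_bound_of_continuousOn
      (hg_cont j).continuousOn
    exact ⟨C, fun x hx => hC x hx⟩
  choose C hC using hgbdd
  -- convergence of u to σstar in positive coordinates
  have key : ∀ j, 0 < q j → Tendsto (fun c : ℕ => u c j) atTop (nhds (σstar j)) := by
    intro j hj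
    apply tendsto_of_subseq_tendsto
    intro ns hns
    obtain ⟨v, hvK, φ, hφ, hφt⟩ := hKcompact.tendsto_subseq (fun n => huK (ns n))
    refine ⟨φ, ?_⟩
    set ψ : ℕ → ℕ := fun n => ns (φ n) with hψdef
    have hψ : Tendsto ψ atTop atTop := hns.comp hφ.tendsto_atTop
    have hul : Tendsto (fun n => u (ψ n)) atTop (nhds v) := hφt
    -- eventual untruncatedness along ψ for positive coordinates
    have hev : ∀ i, 0 < q i → ∀ᶠ n in atTop, (Mn:ℝ) ≤ (qc (ψ n) i : ℝ) := by
      intro i hi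
      exact hψ.eventually ((hinf i hi).eventually_ge_atTop (Mn:ℝ))
    -- limit of the RHS sums (σhat side)
    have hA : Tendsto (fun n => ∑ i, g i (σhat (ψ n) i) * W (ψ n) i) atTop
        (nhds (∑ i, g i (v i) * q i ^ α)) := by
      apply tendsto_finset_sum
      intro i _
      by_cases hi : 0 < q i
      · have h1 : Tendsto (fun n => u (ψ n) i) atTop (nhds (v i)) :=
          ((continuous_apply i).tendsto v).comp hul
        have h2 : Tendsto (fun n => g i (σhat (ψ n) i)) atTop (nhds (g i (v i))) := by
          refine Tendsto.congr' ?_ (((hg_cont i).tendsto (v i)).comp h1)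
          filter_upwards [hev i hi] with n hn
          exact congrArg (g i) (hu_eq (ψ n) i hn)
        exact h2.mul ((hWlim i).comp hψ)
      · have hqi : q i = 0 := le_antisymm (not_lt.1 hi) (hq0 i)
        have hzero : q i ^ α = 0 := by
          rw [hqi]; exact Real.zero_rpow hα.ne'
        rw [hzero, mul_zero]
        have hWl0 : Tendsto (fun n => W (ψ n) i) atTop (nhds 0) := by
          have := (hWlim i).comp hψ
          rwa [hzero] at this
        refine squeeze_zero_norm' ?_
          (by simpa using (tendsto_const_nhds (x := C i)).mul hWl0)
        filter_upwards with n
        rw [Real.norm_eq_abs, abs_mul, abs_of_nonneg (hWnn _ i)]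
        exact mul_le_mul_of_nonneg_right (hC i _ (hσhatBox (ψ n) i)) (hWnn _ i)
    -- limit of the LHS sums (t side)
    have hB : Tendsto (fun n => ∑ i, g i (t (ψ n) i) * W (ψ n) i) atTop
        (nhds (∑ i, g i (σstar i) * q i ^ α)) := by
      apply tendsto_finset_sum
      intro i _
      by_cases hi : 0 < q i
      · have h2 : Tendsto (fun n => g i (t (ψ n) i)) atTop (nhds (g i (σstar i))) := by
          refine Tendsto.congr' ?_ tendsto_const_nhds
          filter_upwards [hev i hi] with n hn
          exact (congrArg (g i) (ht_eq (ψ n) i hn)).symm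
        exact h2.mul ((hWlim i).comp hψ)
      · have hqi : q i = 0 := le_antisymm (not_lt.1 hi) (hq0 i)
        have hzero : q i ^ α = 0 := by
          rw [hqi]; exact Real.zero_rpow hα.ne'
        rw [hzero, mul_zero]
        have hWl0 : Tendsto (fun n => W (ψ n) i) atTop (nhds 0) := by
          have := (hWlim i).comp hψ
          rwa [hzero] at this
        refine squeeze_zero_norm' ?_
          (by simpa using (tendsto_const_nhds (x := C i)).mul hWl0)
        filter_upwards with n
        rw [Real.norm_eq_abs, abs_mul, abs_of_nonneg (hWnn _ i)]
        exact mul_le_mul_of_nonneg_right (hC i _ (htBox (ψ n) i)) (hWnn _ i)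
    -- compare the limits
    have hle : ∑ i, g i (σstar i) * q i ^ α ≤ ∑ i, g i (v i) * q i ^ α := by
      refine le_of_tendsto_of_tendsto hB hA ?_
      filter_upwards [hψ.eventually (eventually_ge_atTop 1)] with n hn
      exact hineq (ψ n) hn
    have hge : ∑ i, g i (v i) * q i ^ α ≤ ∑ i, g i (σstar i) * q i ^ α :=
      hσstar_max v hvK
    have heq2 : ∑ i, g i (v i) * q i ^ α = ∑ i, g i (σstar i) * q i ^ α :=
      le_antisymm hge hle
    -- uniqueness of the maximizer coordinates
    have huniq : σstar j = v j := by
      refine aux_unique_max (fun i => q i ^ α) (fun i => Real.rpow_nonneg (hq0 i) α)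
        g hg_conc K (convex_convexHull ℝ _) ?_ σstar v hσstar_mem hvK hσstar_max heq2
        (Real.rpow_pos_of_pos hj α)
      intro x hx i
      exact ((hBox_mem x).1 (hKBox hx) i).1
    have : Tendsto (fun n => u (ψ n) j) atTop (nhds (v j)) :=
      ((continuous_apply j).tendsto v).comp hul
    rwa [← huniq] at this
  -- conclude for σhat
  refine Tendsto.congr' ?_ (key j₀ hqj₀)
  filter_upwards [(hinf j₀ hqj₀).eventually_ge_atTop (Mn:ℝ)] with c hc
  exact hu_eq c j₀ hc
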